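/- Let G be a finitely generated group of exponential growth with finite symmetric generating set S and word metric ρ_S. Then there is an integer M ≥ 1 (depending only on G and S) such that for every r₀ > 0 there exist an integer r ≥ r₀ and pairwise distinct elements x₁, x₂, …, x_d ∈ G with d := 10^r such that r ≤ ρ_S(x_i,x_j) ≤ 2Mr for all 1 ≤ i < j ≤ d, and r ≤ ρ_S(x_i, e_G) ≤ 2Mr for all 1 ≤ i ≤ d. -/

import Mathlib

open scoped BigOperators
open scoped Classical
open MeasureTheory Filter
open scoped ENNReal NNReal

noncomputable section

/-- The length of the shortest word in the alphabet `Gens` leading from `x` to `y`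
under the (not necessarily associative) multiplication `mul`. -/
def wordLen {α : Type*} (mul : α → α → α) (Gens : Set α) (x y : α) : ℕ :=
  sInf {ℓ : ℕ | ∃ w : List α, (∀ g ∈ w, g ∈ Gens) ∧ w.length = ℓ ∧ w.foldl mul x = y}

/-- The word metric on a group associated with a generating set `S`. -/
def groupWordDist {G : Type*} [Group G] (S : Set G) (g h : G) : ℕ :=
  wordLen (· * ·) S g h

/-- A group has exponential growth w.r.t. a generating set `S` if there is `c > 1`
such that the ball of radius `r` about the identity contains at least `c ^ r`
points for infinitely many positive integers `r`. -/
def HasExpGrowth {G : Type*} [Group G] (S : Set G) : Prop :=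
  ∃ c : ℝ, 1 < c ∧ ∀ N : ℕ, ∃ r : ℕ, N ≤ r ∧ 0 < r ∧
    ∃ T : Finset G, (∀ g ∈ T, groupWordDist S 1 g ≤ r) ∧ (c : ℝ) ^ r ≤ (T.card : ℝ)

/-- The pinned travelling salesman metric associated with the distance function `ρ`
and basepoint `x0`, evaluated on two (finitely supported) functions `X → ZMod 2`. -/
def TS {X : Type*} (ρ : X → X → ℝ) (x0 : X) (A B : X → ZMod 2) : ℝ :=
  if A = B then 0
  else 1 + sInf {L : ℝ | ∃ (ℓ : ℕ) (x : ℕ → X), 1 ≤ ℓ ∧ x 0 = x0 ∧ x ℓ = x0 ∧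
    (∀ p : X, A p + B p ≠ 0 → ∃ i < ℓ, x i = p) ∧
    L = ∑ i ∈ Finset.range ℓ, ρ (x i) (x (i + 1))}

/-- The quotient of an addition-invariant distance function `d` by the subgroup `F`,
expressed on representatives: `quotDistBy d F x y = inf_{v ∈ F} d x (y + v)`. -/
def quotDistBy {E : Type*} [Add E] (d : E → E → ℝ) (F : Set E) (x y : E) : ℝ :=
  sInf {r : ℝ | ∃ v ∈ F, r = d x (y + v)}

/-- The distortion of a map `f` between "metric" spaces `(Y, σ)` and `(Z, θ)`, where the
suprema defining it run over pairs satisfying the apartness relation `P`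
(typically: `≠`, or "lying in distinct cosets"). -/
def distortionOn {Y Z : Type*} (σ : Y → Y → ℝ) (θ : Z → Z → ℝ)
    (P : Y → Y → Prop) (f : Y → Z) : ℝ :=
  sSup {r : ℝ | ∃ u v, P u v ∧ r = θ (f u) (f v) / σ u v} *
  sSup {r : ℝ | ∃ u v, P u v ∧ r = σ u v / θ (f u) (f v)}

/-- Multiplication of the (restricted) wreath-product-style semidirect product
`M^{⊕H} ⋊ H`, where `H` has multiplication `hmul` and acts on `H →₀ M` by
coordinate right-translation:
`(a, h₁) · (b, h₂) = ((a (· h₂⁻¹)) + b, h₁ h₂)`. -/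
def wrMul {H M : Type*} [AddCommMonoid M] (hmul : H → H → H) :
    ((H →₀ M) × H) → ((H →₀ M) × H) → ((H →₀ M) × H) :=
  fun x y => (Finsupp.mapDomain (fun h => hmul h y.2) x.1 + y.1, hmul x.2 y.2)

/-- The lifted generating set `{(±e_{e_G}, e_G)} ∪ {(0, s) : s ∈ S}` of `Z₆ ≀ G`. -/
def liftGens6 {G : Type*} [Group G] (S : Set G) : Set ((G →₀ ZMod 6) × G) :=
  {p | p = (Finsupp.single (1 : G) (1 : ZMod 6), (1 : G)) ∨
       p = (Finsupp.single (1 : G) (-1 : ZMod 6), (1 : G)) ∨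
       (p.1 = 0 ∧ p.2 ∈ S)}

/-- The lifted generating set `{(δ_{e_H}, e_H)} ∪ {(0, t) : t ∈ T}` of `Z₂^{⊕H} ⋊ H`
(and, after quotienting by an invariant subspace `V`, of `(Z₂^{⊕H}/V) ⋊ H`). -/
def liftGens2 {H : Type*} (eH : H) (T : Set H) : Set ((H →₀ ZMod 2) × H) :=
  {p | p = (Finsupp.single eH (1 : ZMod 2), eH) ∨ (p.1 = 0 ∧ p.2 ∈ T)}

/-- The word metric of the quotient group `(Z₂^{⊕H}/V) ⋊ H` (`V` an `H`-invariant
subspace of `Z₂^{⊕H}`), expressed on representatives in `Z₂^{⊕H} × H`: the least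
length of a word in `Gens` leading from `x` to some representative of the coset
of `y`. -/
def quotWordLen {H : Type*} (hmul : H → H → H) (V : Set (H →₀ ZMod 2))
    (Gens : Set ((H →₀ ZMod 2) × H)) (x y : (H →₀ ZMod 2) × H) : ℕ :=
  sInf {ℓ : ℕ | ∃ w : List ((H →₀ ZMod 2) × H), (∀ g ∈ w, g ∈ Gens) ∧ w.length = ℓ ∧
    ∃ v ∈ V, w.foldl (wrMul hmul) x = (y.1 + v, y.2)}

/-- The word metric on `Z₆ = ZMod 6` for the generating set `{1, -1}`. -/
def z6dist (a b : ZMod 6) : ℕ := min (b - a).val (a - b).val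

/-- The Hamming metric on `Z₆^I` built from the word metric on each factor. -/
def hamZ6 {I : Type*} [Fintype I] (u v : I → ZMod 6) : ℝ :=
  ∑ x, (z6dist (u x) (v x) : ℝ)

/-- The pinned travelling salesman metric on `Z₂^{Z₆^I}` over `(Z₆^I, d_Ham)`,
pinned at `0`. -/
def TSHam {I : Type*} [Fintype I] (A B : (I → ZMod 6) → ZMod 2) : ℝ :=
  TS hamZ6 (0 : I → ZMod 6) A B

/-- Coordinatewise reduction `Z₆ → Z₂`. -/
def zbar (a : ZMod 6) : ZMod 2 := (a.val : ZMod 2)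

/-- The `Z₂`-valued inner product on `Z₂^I`. -/
def ip2 {I : Type*} [Fintype I] (a b : I → ZMod 2) : ZMod 2 := ∑ x, a x * b x

/-- The annihilator of a set `C ⊆ Z₂^I`. -/
def perp2 {I : Type*} [Fintype I] (C : Set (I → ZMod 2)) : Set (I → ZMod 2) :=
  {a | ∀ c ∈ C, ip2 a c = 0}

/-- The `Z₂`-valued inner product on `Z₂^α` for a finite type `α`. -/
def ipF {α : Type*} [Fintype α] (W V : α → ZMod 2) : ZMod 2 := ∑ w, W w * V w

/-- The linear functional `L_a : Z₆^I → Z₂`, `L_a(v) = ⟨v̄, a⟩`. -/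
def La {I : Type*} [Fintype I] (a : I → ZMod 2) : (I → ZMod 6) → ZMod 2 :=
  fun v => ∑ x, zbar (v x) * a x

/-- The subspace `D = span({1} ∪ {L_a : a ∈ C}) ≤ Z₂^{Z₆^I}`. -/
def Dspan {I : Type*} [Fintype I] (C : Set (I → ZMod 2)) :
    Submodule (ZMod 2) ((I → ZMod 6) → ZMod 2) :=
  Submodule.span (ZMod 2) ({fun _ => (1 : ZMod 2)} ∪ (La '' C))

/-- The annihilator `D^⊥` of `D = span({1} ∪ {L_a : a ∈ C})` inside `Z₂^{Z₆^I}`. -/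
def DperpSet {I : Type*} [Fintype I] (C : Set (I → ZMod 2)) :
    Set ((I → ZMod 6) → ZMod 2) :=
  {W | ∀ D' ∈ Dspan C, ipF W D' = 0}

/-- The set `B = {e_x : x ∈ I}` of standard basis vectors in `Z₆^I`. -/
def Bset {I : Type*} [Fintype I] : Set (I → ZMod 6) :=
  Set.range (fun x : I => Pi.single x (1 : ZMod 6))

/-- The embedding `ξ : Z₂^I → Z₂^{Z₆^I}`: `ξ(a)` is supported on `B` with
`ξ(a)(e_x) = a_x`. -/
def xi {I : Type*} [Fintype I] (a : I → ZMod 2) : (I → ZMod 6) → ZMod 2 :=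
  fun w => ∑ x : I, if w = (Pi.single x (1 : ZMod 6) : I → ZMod 6) then a x else 0

/-- The map `R : Z₂^{Z₆^I} → Z₂^{Z₆^I}`: `R(W)` is supported on `B` with
`R(W)(e_x) = Σ_w W(w)·⟨ē_x, w̄⟩`. -/
def Rmap {I : Type*} [Fintype I] (W : (I → ZMod 6) → ZMod 2) :
    (I → ZMod 6) → ZMod 2 :=
  fun w => ∑ x : I, if w = (Pi.single x (1 : ZMod 6) : I → ZMod 6) then (∑ v : I → ZMod 6, W v * zbar (v x)) else 0

/-- The indicator function `𝒜 : Z₆ → Z₂` of `{0, 1, 3, 4} ⊆ Z₆`. -/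
def Acal : ZMod 6 → ZMod 2 := fun v => if v = 0 ∨ v = 1 ∨ v = 3 ∨ v = 4 then 1 else 0


/-- The map `Q_n` of the paper: given the excluded region `E` (which should equal
`I₁ ∪ ⋯ ∪ Iₙ ∪ {y₁, …, yₙ}`), the set `Iₙ = In`, the point `yₙ = yn`,
a vector `u ∈ Z₆^{⊕(X∖E)}`, a function `W ∈ Z₂^{Z₆^{Iₙ}}` and `u' ∈ Z₆`,
`Qmap E In yn u W u'` is the element of `Z₂^{Z₆^{⊕X}}` given by
`w ↦ [w|_{X∖E} = u|_{X∖E}] ⬝ W(w|_{Iₙ}) ⬝ 𝒜(w_{yₙ} - u')`. -/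
def Qmap {X : Type*} (E : Set X) (In : Finset X) (yn : X)
    (u : X →₀ ZMod 6) (W : ({x // x ∈ In} → ZMod 6) → ZMod 2) (u' : ZMod 6) :
    (X →₀ ZMod 6) → ZMod 2 :=
  fun w => (if ∀ x ∉ E, w x = u x then 1 else 0) *
    W (fun x => w x.1) * Acal (w yn - u')

/-- The finite set `Eₙ = I₁ ∪ ⋯ ∪ Iₙ ∪ {y₁, …, yₙ}` (with indexing starting at `0`). -/
def EFin {G : Type*} (I : ℕ → Finset G) (y : ℕ → G) (n : ℕ) : Finset G :=
  ((Finset.range (n + 1)).biUnion I) ∪ (Finset.range (n + 1)).image y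

/-- The function `Q̃ₙ(0, W, 0) ∈ Z₂^{⊕(Z₆ ≀ G)}`, realized as a finitely supported
function: it is supported on pairs `(w, e_G)` with `w` supported inside `E`, and its
value there is `W(w|_{Iₙ}) ⬝ 𝒜(w_{yₙ})`.  (Here `E` should contain `Iₙ` and `yₙ`;
it will be `EFin I y n`.) -/
def QF {G : Type*} [Group G] (E : Finset G) (In : Finset G) (yn : G)
    (W : ({x // x ∈ In} → ZMod 6) → ZMod 2) : (((G →₀ ZMod 6) × G) →₀ ZMod 2) :=
  ∑ f : ({x // x ∈ E} → ZMod 6),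
    Finsupp.single ((∑ x ∈ E.attach, Finsupp.single (x : G) (f x), (1 : G)))
      (W (fun x => if h : (x : G) ∈ E then f ⟨x, h⟩ else 0) *
        Acal (if h : yn ∈ E then f ⟨yn, h⟩ else 0))

/-- Given a translation-invariant subspace `U ≤ Z₂^{⊕((Z₆ ≀ G)₀)}` (the zero section
being identified with `Z₆^{⊕G}`), the subspace
`V := {𝒱 ∈ Z₂^{⊕(Z₆ ≀ G)} : ∀ g₁, ((w_g)_g ↦ 𝒱((w_{g g₁⁻¹})_g, g₁)) ∈ U}`. -/
def Vext {G : Type*} [Group G] (U : Set ((G →₀ ZMod 6) →₀ ZMod 2)) :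
    Set (((G →₀ ZMod 6) × G) →₀ ZMod 2) :=
  {V : ((G →₀ ZMod 6) × G) →₀ ZMod 2 | ∀ g₁ : G, ∃ u ∈ U,
    ∀ w : G →₀ ZMod 6, u w = V (Finsupp.mapDomain (· * g₁) w, g₁)}

/-- Extension by zero of a function on the zero section `(Z₆ ≀ G)₀ ≅ Z₆^{⊕G}`
to all of `Z₆ ≀ G`. -/
def extZero {G : Type*} [Group G] (A : (G →₀ ZMod 6) →₀ ZMod 2) :
    ((G →₀ ZMod 6) × G) →₀ ZMod 2 :=
  Finsupp.mapDomain (fun w => (w, (1 : G))) A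

end

section Aux
variable {G : Type*} [Group G]

lemma foldl_mul_eq (g : G) (w : List G) : w.foldl (· * ·) g = g * w.prod := by
  induction w generalizing g with
  | nil => simp
  | cons a w ih => simp [ih, mul_assoc]

lemma exists_prod_word (S : Finset G) (hsymm : ∀ s ∈ S, s⁻¹ ∈ S)
    (hgen : Subgroup.closure (S : Set G) = ⊤) (g : G) :
    ∃ w : List G, (∀ a ∈ w, a ∈ (S : Set G)) ∧ w.prod = g := by
  have hg : g ∈ Subgroup.closure (S : Set G) := by rw [hgen]; trivial
  induction hg using Subgroup.closure_induction with
  | mem s hs => exact ⟨[s], by simpa using hs, by simp⟩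
  | one => exact ⟨[], by simp, by simp⟩
  | mul a b _ _ iha ihb =>
      obtain ⟨w1, h1, e1⟩ := iha
      obtain ⟨w2, h2, e2⟩ := ihb
      exact ⟨w1 ++ w2, by
        intro x hx; rcases List.mem_append.1 hx with h | h
        exacts [h1 _ h, h2 _ h], by simp [e1, e2]⟩
  | inv a _ ih =>
      obtain ⟨w, h1, e1⟩ := ih
      refine ⟨(w.map Inv.inv).reverse, ?_, ?_⟩
      · intro x hx
        simp only [List.mem_reverse, List.mem_map] at hx
        obtain ⟨b, hb, rfl⟩ := hx
        exact hsymm _ (h1 _ hb)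
      · rw [← List.prod_inv_reverse, e1]
end Aux

section Aux2
variable {G : Type*} [Group G]

lemma wordSet_nonempty (S : Finset G) (hsymm : ∀ s ∈ S, s⁻¹ ∈ S)
    (hgen : Subgroup.closure (S : Set G) = ⊤) (x y : G) :
    {ℓ : ℕ | ∃ w : List G, (∀ g ∈ w, g ∈ (S : Set G)) ∧ w.length = ℓ ∧
      w.foldl (· * ·) x = y}.Nonempty := by
  obtain ⟨w, hw, e⟩ := exists_prod_word S hsymm hgen (x⁻¹ * y)
  exact ⟨w.length, w, hw, rfl, by rw [foldl_mul_eq, e, mul_inv_cancel_left]⟩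

lemma exists_word_of_dist (S : Finset G) (hsymm : ∀ s ∈ S, s⁻¹ ∈ S)
    (hgen : Subgroup.closure (S : Set G) = ⊤) (x y : G) :
    ∃ w : List G, (∀ g ∈ w, g ∈ (S : Set G)) ∧
      w.length = groupWordDist (S : Set G) x y ∧ w.foldl (· * ·) x = y := by
  have := Nat.sInf_mem (wordSet_nonempty S hsymm hgen x y)
  obtain ⟨w, h1, h2, h3⟩ := this
  exact ⟨w, h1, h2.symm ▸ rfl, h3⟩

lemma gwd_le_of_word (S : Finset G) (x y : G) (w : List G)
    (hw : ∀ g ∈ w, g ∈ (S : Set G))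
    (he : w.foldl (· * ·) x = y) : groupWordDist (S : Set G) x y ≤ w.length :=
  Nat.sInf_le ⟨w, hw, rfl, he⟩

lemma gwd_self (S : Finset G) (x : G) : groupWordDist (S : Set G) x x = 0 :=
  Nat.le_zero.1 (gwd_le_of_word S x x [] (by simp) (by simp))

lemma gwd_symm (S : Finset G) (hsymm : ∀ s ∈ S, s⁻¹ ∈ S)
    (hgen : Subgroup.closure (S : Set G) = ⊤) (x y : G) :
    groupWordDist (S : Set G) x y = groupWordDist (S : Set G) y x := by
  have key : ∀ a b : G,
      groupWordDist (S : Set G) b a ≤ groupWordDist (S : Set G) a b := by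
    intro a b
    obtain ⟨w, hw, hl, he⟩ := exists_word_of_dist S hsymm hgen a b
    have hb : b = a * w.prod := by rw [← foldl_mul_eq, he]
    refine le_trans (gwd_le_of_word S b a ((w.map Inv.inv).reverse) ?_ ?_) ?_
    · intro x hx
      simp only [List.mem_reverse, List.mem_map] at hx
      obtain ⟨g, hg, rfl⟩ := hx
      exact hsymm _ (hw _ hg)
    · rw [foldl_mul_eq, ← List.prod_inv_reverse, hb, mul_inv_cancel_right]
    · simp [hl]
  exact le_antisymm (key y x) (key x y)

lemma gwd_triangle (S : Finset G) (hsymm : ∀ s ∈ S, s⁻¹ ∈ S)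
    (hgen : Subgroup.closure (S : Set G) = ⊤) (x y z : G) :
    groupWordDist (S : Set G) x z ≤
      groupWordDist (S : Set G) x y + groupWordDist (S : Set G) y z := by
  obtain ⟨w1, hw1, hl1, he1⟩ := exists_word_of_dist S hsymm hgen x y
  obtain ⟨w2, hw2, hl2, he2⟩ := exists_word_of_dist S hsymm hgen y z
  refine le_trans (gwd_le_of_word S x z (w1 ++ w2) ?_ ?_) ?_
  · intro g hg; rcases List.mem_append.1 hg with h | h
    exacts [hw1 _ h, hw2 _ h]
  · rw [List.foldl_append, he1, he2]
  · simp [hl1, hl2]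

lemma card_ball_le (S : Finset G) (hsymm : ∀ s ∈ S, s⁻¹ ∈ S)
    (hgen : Subgroup.closure (S : Set G) = ⊤) (p : G) (r : ℕ) (F : Finset G)
    (hF : ∀ t ∈ F, groupWordDist (S : Set G) p t < r) :
    F.card ≤ (S.card + 1) ^ r := by
  classical
  have hw : ∀ t : G, ∃ w : List {s // s ∈ S},
      (w.map Subtype.val).foldl (· * ·) p = t ∧
      w.length = groupWordDist (S : Set G) p t := by
    intro t
    obtain ⟨w, h1, h2, h3⟩ := exists_word_of_dist S hsymm hgen p t
    refine ⟨w.attach.map (fun a => ⟨a.1, h1 _ a.2⟩), ?_, by simp [h2]⟩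
    have hmv : (w.attach.map (fun a => (⟨a.1, h1 _ a.2⟩ : {s // s ∈ S}))).map
        Subtype.val = w := by
      simp [List.map_map]
    rw [hmv, h3]
  choose w hw1 hw2 using hw
  have hinj : Set.InjOn (fun t => fun i : Fin r => (w t)[(i : ℕ)]?) F := by
    intro a ha b hb hfab
    rw [Finset.mem_coe] at ha hb
    have hla : (w a).length < r := by rw [hw2]; exact hF a ha
    have hlb : (w b).length < r := by rw [hw2]; exact hF b hb
    have hlist : w a = w b := by
      apply List.ext_getElem?
      intro n
      by_cases hn : n < r
      · exact congrFun hfab ⟨n, hn⟩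
      · have h1 : (w a)[n]? = none := List.getElem?_eq_none_iff.2 (by omega)
        have h2 : (w b)[n]? = none := List.getElem?_eq_none_iff.2 (by omega)
        rw [h1, h2]
    have e1 : ((w a).map Subtype.val).foldl (· * ·) p
        = ((w b).map Subtype.val).foldl (· * ·) p := by rw [hlist]
    rw [hw1, hw1] at e1
    exact e1
  have hcard := Finset.card_le_card_of_injOn _ (fun x _ => Finset.mem_univ
    (fun i : Fin r => (w x)[(i : ℕ)]?)) hinj
  have : Fintype.card (Fin r → Option {s // s ∈ S}) = (S.card + 1) ^ r := by
    simp [Fintype.card_fun]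
  rw [Finset.card_univ, this] at hcard
  exact hcard

end Aux2

/-- In a finitely generated group of exponential growth there are, at
arbitrarily large scales `r`, sets of `d = 10^r` points that are pairwise roughly
equidistant: all pairwise distances, and all distances to the identity, lie in `[r, 2Mr]`,
where `M ≥ 1` depends only on `G` and `S`. -/
theorem equidistant_points_in_exp_growth_group {G : Type*} [Group G] (S : Finset G)
    (hsymm : ∀ s ∈ S, s⁻¹ ∈ S) (hgen : Subgroup.closure (S : Set G) = ⊤)
    (hexp : HasExpGrowth (S : Set G)) :
    ∃ M : ℕ, 1 ≤ M ∧
      ∀ r₀ : ℝ, 0 < r₀ → ∃ r : ℕ, r₀ ≤ (r : ℝ) ∧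
        ∃ x : Fin (10 ^ r) → G, Function.Injective x ∧
          (∀ i j : Fin (10 ^ r), i ≠ j →
            r ≤ groupWordDist (S : Set G) (x i) (x j) ∧
            groupWordDist (S : Set G) (x i) (x j) ≤ 2 * M * r) ∧
          (∀ i : Fin (10 ^ r),
            r ≤ groupWordDist (S : Set G) (x i) 1 ∧
            groupWordDist (S : Set G) (x i) 1 ≤ 2 * M * r) := by
  classical
  obtain ⟨c, hc, hgrow⟩ := hexp
  set K : ℕ := 20 * (S.card + 1) with hKdef
  have hK1 : 1 ≤ K := by omega
  obtain ⟨n, hn⟩ := pow_unbounded_of_one_lt ((K : ℝ) ^ 2) hc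
  set M := max n 1 with hMdef
  have hM1 : 1 ≤ M := le_max_right _ _
  have hM0 : 0 < M := hM1
  refine ⟨M, hM1, ?_⟩
  intro r₀ hr₀
  obtain ⟨R, hRN, hRpos, T, hT, hTcard⟩ := hgrow (M * (⌈r₀⌉₊ + 2))
  set r := R / M + 1 with hrdef
  have hrc : ⌈r₀⌉₊ + 2 ≤ R / M := (Nat.le_div_iff_mul_le hM0).2 (by rw [mul_comm]; exact hRN)
  have hr2 : 2 ≤ r := by omega
  have hrr0 : r₀ ≤ (r : ℝ) := by
    have h1 : r₀ ≤ (⌈r₀⌉₊ : ℝ) := Nat.le_ceil r₀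
    have h2 : (⌈r₀⌉₊ : ℝ) ≤ (r : ℝ) := by exact_mod_cast Nat.le_of_lt (by omega)
    linarith
  have hRle : R ≤ M * r := by
    have h1 := Nat.div_add_mod R M
    have h2 := Nat.mod_lt R hM0
    calc R = M * (R / M) + R % M := h1.symm
      _ ≤ M * (R / M) + M := by omega
      _ = M * r := by rw [hrdef]; ring
  have hMr1 : M * (r - 1) ≤ R := by
    have he : r - 1 = R / M := by omega
    rw [he, mul_comm]
    exact Nat.div_mul_le_self R M
  have hc1 : (1 : ℝ) ≤ c := hc.le
  have hKrN : K ^ r ≤ T.card := by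
    have hKr : ((K ^ r : ℕ) : ℝ) ≤ (T.card : ℝ) := by
      push_cast
      have e1 : (K : ℝ) ^ r ≤ (K : ℝ) ^ (2 * (r - 1)) :=
        pow_le_pow_right₀ (by exact_mod_cast hK1) (by omega)
      have e2 : (K : ℝ) ^ (2 * (r - 1)) = ((K : ℝ) ^ 2) ^ (r - 1) := by
        rw [← pow_mul]
      have e3 : ((K : ℝ) ^ 2) ^ (r - 1) ≤ (c ^ M) ^ (r - 1) :=
        pow_le_pow_left₀ (by positivity)
          (le_trans hn.le (pow_le_pow_right₀ hc1 (le_max_left n 1))) _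
      have e4 : (c ^ M) ^ (r - 1) = c ^ (M * (r - 1)) := by rw [← pow_mul]
      have e5 : c ^ (M * (r - 1)) ≤ c ^ R := pow_le_pow_right₀ hc1 hMr1
      linarith [hTcard]
    exact_mod_cast hKr
  set T' := insert (1 : G) T with hT'def
  have hT'1 : (1 : G) ∈ T' := Finset.mem_insert_self _ _
  have hT'dist : ∀ t ∈ T', groupWordDist (S : Set G) 1 t ≤ R := by
    intro t ht
    rcases Finset.mem_insert.1 ht with rfl | ht
    · rw [gwd_self]; omega
    · exact hT t ht
  set sep : Finset G → Prop := fun P => (1 : G) ∈ P ∧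
    ∀ a ∈ P, ∀ b ∈ P, a ≠ b → r ≤ groupWordDist (S : Set G) a b with hsepdef
  have hSne : ((T'.powerset).filter sep).Nonempty := by
    refine ⟨{1}, ?_⟩
    rw [Finset.mem_filter, Finset.mem_powerset]
    refine ⟨Finset.singleton_subset_iff.2 hT'1, Finset.mem_singleton_self 1, ?_⟩
    intro a ha b hb hab
    rw [Finset.mem_singleton] at ha hb
    exact absurd (ha.trans hb.symm) hab
  obtain ⟨P, hPmem, hPmax⟩ := Finset.exists_max_image _ Finset.card hSne
  rw [Finset.mem_filter, Finset.mem_powerset] at hPmem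
  obtain ⟨hPsub, hP1, hPsep⟩ := hPmem
  have hcover : ∀ t ∈ T', ∃ p ∈ P, groupWordDist (S : Set G) p t < r := by
    intro t ht
    by_contra h
    push_neg at h
    have htP : t ∉ P := by
      intro hmem
      have := h t hmem
      rw [gwd_self] at this
      omega
    have hins : insert t P ∈ (T'.powerset).filter sep := by
      rw [Finset.mem_filter, Finset.mem_powerset]
      refine ⟨Finset.insert_subset ht hPsub, Finset.mem_insert_of_mem hP1, ?_⟩
      intro a ha b hb hab
      rcases Finset.mem_insert.1 ha with ha' | ha'
      · rcases Finset.mem_insert.1 hb with hb' | hb'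
        · exact absurd (ha'.trans hb'.symm) hab
        · rw [show a = t from ha', gwd_symm S hsymm hgen]; exact h b hb'
      · rcases Finset.mem_insert.1 hb with hb' | hb'
        · rw [show b = t from hb']; exact h a ha'
        · exact hPsep a ha' b hb' hab
    have := hPmax _ hins
    rw [Finset.card_insert_of_notMem htP] at this
    omega
  have hcov2 : T' ⊆ P.biUnion
      (fun p => T'.filter (fun t => groupWordDist (S : Set G) p t < r)) := by
    intro t ht
    obtain ⟨p, hp, hd⟩ := hcover t ht
    exact Finset.mem_biUnion.2 ⟨p, hp, Finset.mem_filter.2 ⟨ht, hd⟩⟩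
  have hTP : T'.card ≤ P.card * (S.card + 1) ^ r := by
    calc T'.card ≤ (P.biUnion
        (fun p => T'.filter (fun t => groupWordDist (S : Set G) p t < r))).card :=
          Finset.card_le_card hcov2
      _ ≤ ∑ p ∈ P, (T'.filter (fun t => groupWordDist (S : Set G) p t < r)).card :=
          Finset.card_biUnion_le
      _ ≤ P.card * (S.card + 1) ^ r := by
          rw [← smul_eq_mul]
          refine Finset.sum_le_card_nsmul _ _ _ ?_
          intro p _
          exact card_ball_le S hsymm hgen p r _ (fun t ht => (Finset.mem_filter.1 ht).2)
  have hPcard : 10 ^ r + 1 ≤ P.card := by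
    have h20 : 20 ^ r * (S.card + 1) ^ r ≤ P.card * (S.card + 1) ^ r := by
      have hKe : K ^ r = 20 ^ r * (S.card + 1) ^ r := by rw [hKdef, mul_pow]
      calc 20 ^ r * (S.card + 1) ^ r = K ^ r := hKe.symm
        _ ≤ T.card := hKrN
        _ ≤ T'.card := Finset.card_le_card (Finset.subset_insert _ _)
        _ ≤ P.card * (S.card + 1) ^ r := hTP
    have hpos : 0 < (S.card + 1) ^ r := pow_pos (Nat.succ_pos _) r
    have h20' : 20 ^ r ≤ P.card := Nat.le_of_mul_le_mul_right h20 hpos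
    have h2r : 2 * 10 ^ r ≤ 20 ^ r := by
      calc 2 * 10 ^ r ≤ 2 ^ r * 10 ^ r := by
            refine Nat.mul_le_mul_right _ ?_
            have h21 : 2 ^ 1 ≤ 2 ^ r := Nat.pow_le_pow_right (by norm_num) (by omega)
            simpa using h21
        _ = 20 ^ r := by norm_num [← mul_pow]
    have h1r : 1 ≤ 10 ^ r := Nat.one_le_pow _ _ (by norm_num)
    omega
  have hQle : 10 ^ r ≤ (P.erase 1).card := by
    rw [Finset.card_erase_of_mem hP1]; omega
  obtain ⟨Q, hQsub, hQcard⟩ := Finset.exists_subset_card_eq hQle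
  have e := Finset.equivFinOfCardEq hQcard
  refine ⟨r, hrr0, fun i => ((e.symm i : Q) : G), ?_, ?_, ?_⟩
  · exact Subtype.coe_injective.comp e.symm.injective
  all_goals
    have hxE : ∀ i : Fin (10 ^ r), ((e.symm i : Q) : G) ∈ P.erase 1 :=
      fun i => hQsub (e.symm i).2
    have hxP : ∀ i : Fin (10 ^ r), ((e.symm i : Q) : G) ∈ P :=
      fun i => Finset.mem_of_mem_erase (hxE i)
    have hxne1 : ∀ i : Fin (10 ^ r), ((e.symm i : Q) : G) ≠ 1 :=
      fun i => Finset.ne_of_mem_erase (hxE i)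
    have hxR : ∀ i : Fin (10 ^ r), groupWordDist (S : Set G) 1 ((e.symm i : Q) : G) ≤ R :=
      fun i => hT'dist _ (hPsub (hxP i))
  · intro i j hij
    have hne : ((e.symm i : Q) : G) ≠ ((e.symm j : Q) : G) := by
      intro hcontra
      exact hij (by
        have := Subtype.coe_injective hcontra
        exact e.symm.injective this)
    constructor
    · exact hPsep _ (hxP i) _ (hxP j) hne
    · calc groupWordDist (S : Set G) ((e.symm i : Q) : G) ((e.symm j : Q) : G)
          ≤ groupWordDist (S : Set G) ((e.symm i : Q) : G) 1 +
            groupWordDist (S : Set G) 1 ((e.symm j : Q) : G) :=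
            gwd_triangle S hsymm hgen _ _ _
        _ ≤ R + R := by
            refine add_le_add ?_ (hxR j)
            rw [gwd_symm S hsymm hgen]
            exact hxR i
        _ ≤ M * r + M * r := add_le_add hRle hRle
        _ = 2 * M * r := by ring
  · intro i
    constructor
    · exact hPsep _ (hxP i) _ hP1 (hxne1 i)
    · calc groupWordDist (S : Set G) ((e.symm i : Q) : G) 1
          = groupWordDist (S : Set G) 1 ((e.symm i : Q) : G) :=
            gwd_symm S hsymm hgen _ _
        _ ≤ R := hxR i
        _ ≤ M * r := hRle
        _ ≤ 2 * M * r := Nat.mul_le_mul_right r (by omega)
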